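/- Let S be a finite totally ordered set and P an attractive, translation-invariant, ergodic PCA dynamics on S^{Z^d} with unique stationary measure ν, and let ρ(n) be the probability, under the increasing coupling P ⪯⊗ P started from (−, +), that the two components disagree at site 0 at time n. Then for every continuous function f on S^{Z^d} with |||f||| = Σ_{k∈Z^d} Var_k(f) < ∞ and every n ≥ 1: sup_σ |P(f(ω(n)) | ω(0) = σ) − ν(f)| ≤ 2 |||f||| ρ(n). -/

import Mathlib

open MeasureTheory ProbabilityTheory Filter

abbrev Site (d : ℕ) : Type := Fin d → ℤ
abbrev Config (d : ℕ) (S : Type*) : Type _ := Site d → S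

/-- Stochastic ordering of measures: `ν₁ ⪯ ν₂` iff `ν₁(f) ≤ ν₂(f)` for every
bounded measurable increasing `f`. -/
def StochLE {α : Type*} [MeasurableSpace α] [Preorder α] (μ ν : Measure α) : Prop :=
  ∀ f : α → ℝ, Measurable f → Monotone f → (∃ C, ∀ x, |f x| ≤ C) →
    ∫ x, f x ∂μ ≤ ∫ x, f x ∂ν

/-- A (local) PCA dynamics on `S^{ℤ^d}`: a Markov kernel together with its family of
local updating rules, the kernel being the product over sites of the updating rules. -/
structure PCA (d : ℕ) (S : Type*) [MeasurableSpace S] where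
  rule : Site d → Config d S → Measure S
  rule_prob : ∀ k η, IsProbabilityMeasure (rule k η)
  rule_local : ∀ k : Site d, ∃ V : Finset (Site d), ∀ η η' : Config d S,
      (∀ j ∈ V, η j = η' j) → rule k η = rule k η'
  toKernel : Kernel (Config d S) (Config d S)
  markov : IsMarkovKernel toKernel
  product : ∀ (η : Config d S) (Λ : Finset (Site d)) (y : Site d → S),
      toKernel η {σ : Config d S | ∀ k ∈ Λ, σ k = y k} = ∏ k ∈ Λ, rule k η {y k}


/-- An `N`-tuple of PCA dynamics is increasing if ordered configurations give
stochastically ordered transition measures. -/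
def IncreasingTuple {d : ℕ} {S : Type*} [MeasurableSpace S] [Preorder S] {N : ℕ}
    (P : Fin N → PCA d S) : Prop :=
  ∀ ζ : Fin N → Config d S, Monotone ζ →
    ∀ i j : Fin N, i ≤ j → StochLE ((P i).toKernel (ζ i)) ((P j).toKernel (ζ j))

/-- A PCA dynamics is attractive if it maps bounded measurable increasing functions to
increasing functions. -/
def Attractive {d : ℕ} {S : Type*} [MeasurableSpace S] [Preorder S] (P : PCA d S) : Prop :=
  ∀ f : Config d S → ℝ, Measurable f → Monotone f → (∃ C, ∀ x, |f x| ≤ C) →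
    Monotone fun η => ∫ σ, f σ ∂(P.toKernel η)

/-- The maximal element of a nonempty finite linear order. -/
noncomputable def topS (S : Type*) [Fintype S] [LinearOrder S] [Nonempty S] : S :=
  Finset.univ.max' Finset.univ_nonempty


/-- The minimal element of a nonempty finite linear order. -/
noncomputable def botS (S : Type*) [Fintype S] [LinearOrder S] [Nonempty S] : S :=
  Finset.univ.min' Finset.univ_nonempty


/-- The Lévy (generalised inverse) probability transform of the distribution function of
a measure on a finite linear order: `t ↦ min {s : F(s) ≥ t}`. -/
noncomputable def levyInv {S : Type*} [Fintype S] [LinearOrder S] [Nonempty S]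
    [MeasurableSpace S] (μ : Measure S) (t : ℝ) : S :=
  letI := Classical.decPred fun s : S => t ≤ (μ {s' | s' ≤ s}).toReal
  if h : (Finset.univ.filter fun s : S => t ≤ (μ {s' | s' ≤ s}).toReal).Nonempty then
    (Finset.univ.filter fun s : S => t ≤ (μ {s' | s' ≤ s}).toReal).min' h
  else Classical.arbitrary S


/-- The increasing coupling of two probability measures on a finite linear order:
the joint law of `((F_μ)⁻¹(U), (F_ν)⁻¹(U))` for a single uniform `U` on `(0,1)`. -/
noncomputable def couple {S : Type*} [Fintype S] [LinearOrder S] [Nonempty S]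
    [MeasurableSpace S] (μ ν : Measure S) : Measure (S × S) :=
  (volume.restrict (Set.Ioo (0 : ℝ) 1)).map fun t => (levyInv μ t, levyInv ν t)


/-- The law at time `n` of the Markov chain with transition kernel `K` and initial law `μ`. -/
noncomputable def iterLaw {α : Type*} [MeasurableSpace α] (K : Kernel α α) (μ : Measure α) :
    ℕ → Measure α
  | 0 => μ
  | n + 1 => (iterLaw K μ n).bind fun a => K a


/-- Translation invariance (space homogeneity) of a PCA dynamics. -/
def TranslationInvariant {d : ℕ} {S : Type*} [MeasurableSpace S] (P : PCA d S) : Prop :=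
  ∀ (k : Site d) (η : Config d S), P.rule k η = P.rule 0 fun x => η (x + k)


/-- The oscillation of `f` at the site `k`. -/
noncomputable def varAt {d : ℕ} {S : Type*} (f : Config d S → ℝ) (k : Site d) : ℝ :=
  sSup {r | ∃ σ η : Config d S, (∀ k' : Site d, k' ≠ k → σ k' = η k') ∧ r = |f σ - f η|}

set_option linter.unusedSectionVars false
set_option maxHeartbeats 1000000

section FinMeas

variable {A : Type*} [MeasurableSpace A] [MeasurableSingletonClass A]

lemma measure_set_eq_sum [Fintype A] (μ : MeasureTheory.Measure A) (B : Set A) :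
    μ B = ∑ a ∈ (Set.toFinite B).toFinset, μ {a} := by
  classical
  have hB : B = ⋃ a ∈ (Set.toFinite B).toFinset, {a} := by
    ext x; simp
  nth_rewrite 1 [hB]
  rw [MeasureTheory.measure_biUnion_finset]
  · intro x _ y _ hxy
    simp only [Function.onFun, Set.disjoint_singleton]
    exact hxy
  · intro a _; exact MeasurableSet.singleton a

lemma fin_meas_ext [Fintype A] (μ ν : MeasureTheory.Measure A)
    (h : ∀ a : A, μ {a} = ν {a}) : μ = ν := by
  ext s _
  rw [measure_set_eq_sum, measure_set_eq_sum]
  exact Finset.sum_congr rfl fun a _ => h a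

end FinMeas

section LInv

open MeasureTheory

variable {S : Type*} [Fintype S] [LinearOrder S] [Nonempty S]
  [MeasurableSpace S] [MeasurableSingletonClass S]

lemma le_topS (s : S) : s ≤ topS S := Finset.le_max' _ s (Finset.mem_univ s)
lemma botS_le (s : S) : botS S ≤ s := Finset.min'_le _ s (Finset.mem_univ s)

/-- The distribution function. -/
noncomputable def cdfS (μ : Measure S) (s : S) : ℝ := (μ {s' | s' ≤ s}).toReal

/-- The filter set appearing in `levyInv`. -/
noncomputable def Fil (μ : Measure S) (t : ℝ) : Finset S :=
  letI := Classical.decPred fun s : S => t ≤ (μ {s' | s' ≤ s}).toReal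
  Finset.univ.filter fun s : S => t ≤ (μ {s' | s' ≤ s}).toReal

lemma mem_Fil {μ : Measure S} {t : ℝ} {s : S} : s ∈ Fil μ t ↔ t ≤ cdfS μ s := by
  classical
  simp [Fil, cdfS]

lemma levyInv_def (μ : Measure S) (t : ℝ) :
    levyInv μ t = if h : (Fil μ t).Nonempty then (Fil μ t).min' h
      else Classical.arbitrary S := rfl

variable {μ ν : Measure S}

lemma cdfS_nonneg (s : S) : 0 ≤ cdfS μ s := ENNReal.toReal_nonneg

lemma cdfS_mono [IsProbabilityMeasure μ] {s s' : S} (h : s ≤ s') :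
    cdfS μ s ≤ cdfS μ s' := by
  refine ENNReal.toReal_mono (measure_ne_top μ _) (measure_mono ?_)
  intro x hx; exact le_trans hx h

lemma cdfS_le_one [IsProbabilityMeasure μ] (s : S) : cdfS μ s ≤ 1 := by
  have := measure_mono (μ := μ) (Set.subset_univ {s' | s' ≤ s})
  rw [measure_univ] at this
  simpa [cdfS] using ENNReal.toReal_mono (by simp) this

lemma cdfS_topS [IsProbabilityMeasure μ] : cdfS μ (topS S) = 1 := by
  have : {s' : S | s' ≤ topS S} = Set.univ := by
    ext x; simp [le_topS]
  simp [cdfS, this]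

lemma Fil_nonempty [IsProbabilityMeasure μ] {t : ℝ} (ht : t ≤ 1) : (Fil μ t).Nonempty :=
  ⟨topS S, mem_Fil.2 (by rw [cdfS_topS]; exact ht)⟩

lemma Fil_empty [IsProbabilityMeasure μ] {t : ℝ} (ht : ¬ t ≤ 1) : ¬ (Fil μ t).Nonempty := by
  rintro ⟨s, hs⟩
  exact ht (le_trans (mem_Fil.1 hs) (cdfS_le_one s))

lemma levyInv_mem [IsProbabilityMeasure μ] {t : ℝ} (ht : t ≤ 1) :
    t ≤ cdfS μ (levyInv μ t) := by
  rw [levyInv_def, dif_pos (Fil_nonempty ht)]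
  exact mem_Fil.1 (Finset.min'_mem _ _)

lemma levyInv_le_iff [IsProbabilityMeasure μ] {t : ℝ} (ht : t ≤ 1) {s : S} :
    levyInv μ t ≤ s ↔ t ≤ cdfS μ s := by
  constructor
  · intro h
    exact le_trans (levyInv_mem ht) (cdfS_mono h)
  · intro h
    rw [levyInv_def, dif_pos (Fil_nonempty ht)]
    exact Finset.min'_le _ _ (mem_Fil.2 h)

/-- Monotonicity of the Lévy inverse with respect to stochastic domination. -/
lemma levyInv_mono [IsProbabilityMeasure μ] [IsProbabilityMeasure ν]
    (h : ∀ s, cdfS ν s ≤ cdfS μ s) (t : ℝ) : levyInv μ t ≤ levyInv ν t := by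
  by_cases ht : t ≤ 1
  · rw [levyInv_le_iff ht]
    exact le_trans (levyInv_mem ht) (h _)
  · rw [levyInv_def, levyInv_def, dif_neg (Fil_empty ht), dif_neg (Fil_empty ht)]

lemma measurable_levyInv (μ : Measure S) [IsProbabilityMeasure μ] :
    Measurable (levyInv μ) := by
  apply measurable_to_countable'
  intro s
  have hset : levyInv μ ⁻¹' {s} =
      (Set.Iic (1:ℝ) ∩ (Set.Iic (cdfS μ s) ∩ ⋂ s' : S, {t : ℝ | s' < s → cdfS μ s' < t}))
      ∪ (Set.Ioi (1:ℝ) ∩ {t : ℝ | Classical.arbitrary S = s}) := by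
    ext t
    simp only [Set.mem_preimage, Set.mem_singleton_iff, Set.mem_union, Set.mem_inter_iff,
      Set.mem_Iic, Set.mem_Ioi, Set.mem_iInter, Set.mem_setOf_eq]
    by_cases ht : t ≤ 1
    · have hne := Fil_nonempty (μ := μ) ht
      rw [levyInv_def, dif_pos hne]
      constructor
      · intro h
        refine Or.inl ⟨ht, ?_, ?_⟩
        · rw [← h]; exact mem_Fil.1 (Finset.min'_mem _ _)
        · intro s' hs'
          rw [← h] at hs'
          by_contra hc
          push_neg at hc
          exact absurd (Finset.min'_le _ _ (mem_Fil.2 hc)) (not_le.2 hs')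
      · rintro (⟨_, h1, h2⟩ | ⟨h1, _⟩)
        · refine le_antisymm (Finset.min'_le _ _ (mem_Fil.2 h1)) ?_
          by_contra hc
          push_neg at hc
          have := h2 _ hc
          exact absurd (mem_Fil.1 (Finset.min'_mem _ hne)) (not_le.2 this)
        · exact absurd ht (not_le.2 h1)
    · rw [levyInv_def, dif_neg (Fil_empty ht)]
      push_neg at ht
      constructor
      · intro h; exact Or.inr ⟨ht, h⟩
      · rintro (⟨h1, _⟩ | ⟨_, h2⟩)
        · exact absurd h1 (not_le.2 ht)
        · exact h2
  rw [hset]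
  refine MeasurableSet.union (measurableSet_Iic.inter (measurableSet_Iic.inter ?_))
    (measurableSet_Ioi.inter ?_)
  · refine MeasurableSet.iInter fun s' => ?_
    by_cases h : s' < s
    · simp only [h, true_implies]
      exact measurableSet_Ioi
    · simp only [h, false_implies, Set.setOf_true]
      exact MeasurableSet.univ
  · by_cases h : Classical.arbitrary S = s
    · simp only [h, Set.setOf_true]; exact MeasurableSet.univ
    · simp only [h, Set.setOf_false]; exact MeasurableSet.empty

end LInv
section LInvLaw

open MeasureTheory

variable {S : Type*} [Fintype S] [LinearOrder S] [Nonempty S]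
  [MeasurableSpace S] [MeasurableSingletonClass S]

/-- Finite measures on a finite linear order with the same distribution function agree. -/
lemma fin_meas_ext_Iic (μ ν : Measure S) [IsFiniteMeasure μ] [IsFiniteMeasure ν]
    (h : ∀ s, μ (Set.Iic s) = ν (Set.Iic s)) : μ = ν := by
  classical
  have key : ∀ s : S, μ {s} = ν {s} := by
    intro s
    induction s using WellFoundedLT.induction with
    | ind s IH =>
      have hIic : ∀ (m : Measure S), m (Set.Iic s) = m (Set.Iio s) + m {s} := by
        intro m
        have : Set.Iic s = Set.Iio s ∪ {s} := by
          ext x; simp [le_iff_lt_or_eq]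
        rw [this, measure_union _ (MeasurableSet.singleton s)]
        simp [Set.disjoint_singleton_right]
      have hIio : μ (Set.Iio s) = ν (Set.Iio s) := by
        rw [measure_set_eq_sum μ, measure_set_eq_sum ν]
        apply Finset.sum_congr rfl
        intro a ha
        simp only [Set.Finite.mem_toFinset, Set.mem_Iio] at ha
        exact IH a ha
      have h1 := h s
      rw [hIic μ, hIic ν, hIio] at h1
      exact (ENNReal.add_right_inj (ne_of_lt (measure_lt_top ν _))).1 h1
  exact fin_meas_ext μ ν key

lemma leb01_prob : IsProbabilityMeasure (volume.restrict (Set.Ioo (0:ℝ) 1)) := by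
  constructor
  rw [Measure.restrict_apply MeasurableSet.univ, Set.univ_inter, Real.volume_Ioo]
  norm_num

lemma map_levyInv (μ : Measure S) [IsProbabilityMeasure μ] :
    Measure.map (levyInv μ) (volume.restrict (Set.Ioo (0:ℝ) 1)) = μ := by
  haveI := leb01_prob
  haveI : IsProbabilityMeasure (Measure.map (levyInv μ) (volume.restrict (Set.Ioo (0:ℝ) 1))) :=
    Measure.isProbabilityMeasure_map (measurable_levyInv μ).aemeasurable
  refine fin_meas_ext_Iic _ _ fun s => ?_
  rw [Measure.map_apply (measurable_levyInv μ) (Set.toFinite _).measurableSet,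
    Measure.restrict_apply (measurable_levyInv μ (Set.toFinite _).measurableSet)]
  have hc0 : 0 ≤ cdfS μ s := cdfS_nonneg s
  have hc1 : cdfS μ s ≤ 1 := cdfS_le_one s
  have hμs : μ (Set.Iic s) = ENNReal.ofReal (cdfS μ s) := by
    rw [cdfS, ENNReal.ofReal_toReal (measure_ne_top μ _)]; rfl
  rw [hμs]
  by_cases h : cdfS μ s = 1
  · have hset : levyInv μ ⁻¹' Set.Iic s ∩ Set.Ioo 0 1 = Set.Ioo (0:ℝ) 1 := by
      ext t
      simp only [Set.mem_inter_iff, Set.mem_preimage, Set.mem_Iic, Set.mem_Ioo,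
        and_iff_right_iff_imp]
      rintro ⟨h1, h2⟩
      rw [levyInv_le_iff (le_of_lt h2), h]
      exact le_of_lt h2
    rw [hset, Real.volume_Ioo, h]
    norm_num
  · have hlt : cdfS μ s < 1 := lt_of_le_of_ne hc1 h
    have hset : levyInv μ ⁻¹' Set.Iic s ∩ Set.Ioo 0 1 = Set.Ioc (0:ℝ) (cdfS μ s) := by
      ext t
      simp only [Set.mem_inter_iff, Set.mem_preimage, Set.mem_Iic, Set.mem_Ioo, Set.mem_Ioc]
      constructor
      · rintro ⟨h1, h2, h3⟩
        exact ⟨h2, (levyInv_le_iff (le_of_lt h3)).1 h1⟩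
      · rintro ⟨h1, h2⟩
        have h3 : t < 1 := lt_of_le_of_lt h2 hlt
        exact ⟨(levyInv_le_iff (le_of_lt h3)).2 h2, h1, h3⟩
    rw [hset, Real.volume_Ioc]
    norm_num

end LInvLaw
section Couple

open MeasureTheory

variable {S : Type*} [Fintype S] [LinearOrder S] [Nonempty S]
  [MeasurableSpace S] [MeasurableSingletonClass S]
  {μ ν : Measure S}

lemma measurable_levyPair (μ ν : Measure S) [IsProbabilityMeasure μ] [IsProbabilityMeasure ν] :
    Measurable fun t => (levyInv μ t, levyInv ν t) :=
  (measurable_levyInv μ).prodMk (measurable_levyInv ν)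

lemma couple_prob [IsProbabilityMeasure μ] [IsProbabilityMeasure ν] :
    IsProbabilityMeasure (couple μ ν) := by
  haveI := leb01_prob
  exact Measure.isProbabilityMeasure_map (measurable_levyPair μ ν).aemeasurable

lemma couple_apply [IsProbabilityMeasure μ] [IsProbabilityMeasure ν] {B : Set (S × S)} :
    couple μ ν B =
      volume.restrict (Set.Ioo (0:ℝ) 1) {t | (levyInv μ t, levyInv ν t) ∈ B} :=
  Measure.map_apply (measurable_levyPair μ ν) (Set.toFinite B).measurableSet

lemma couple_fst [IsProbabilityMeasure μ] [IsProbabilityMeasure ν] :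
    Measure.map Prod.fst (couple μ ν) = μ := by
  rw [couple, Measure.map_map measurable_fst (measurable_levyPair μ ν)]
  exact map_levyInv μ

lemma couple_snd [IsProbabilityMeasure μ] [IsProbabilityMeasure ν] :
    Measure.map Prod.snd (couple μ ν) = ν := by
  rw [couple, Measure.map_map measurable_snd (measurable_levyPair μ ν)]
  exact map_levyInv ν

lemma couple_fst_apply [IsProbabilityMeasure μ] [IsProbabilityMeasure ν] (B : Set S) :
    couple μ ν (Prod.fst ⁻¹' B) = μ B := by
  conv_rhs => rw [← couple_fst (μ := μ) (ν := ν)]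
  rw [Measure.map_apply measurable_fst (Set.toFinite B).measurableSet]

lemma couple_snd_apply [IsProbabilityMeasure μ] [IsProbabilityMeasure ν] (B : Set S) :
    couple μ ν (Prod.snd ⁻¹' B) = ν B := by
  conv_rhs => rw [← couple_snd (μ := μ) (ν := ν)]
  rw [Measure.map_apply measurable_snd (Set.toFinite B).measurableSet]

/-- If the cdf of `ν` is dominated by that of `μ`, the coupling is supported on
ordered pairs: the set of strictly reversed pairs is null. -/
lemma couple_ordered [IsProbabilityMeasure μ] [IsProbabilityMeasure ν]
    (h : ∀ s, cdfS ν s ≤ cdfS μ s) :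
    couple μ ν {p : S × S | ¬ p.1 ≤ p.2} = 0 := by
  rw [couple_apply]
  have : {t : ℝ | (levyInv μ t, levyInv ν t) ∈ {p : S × S | ¬ p.1 ≤ p.2}} = ∅ := by
    ext t
    simp only [Set.mem_setOf_eq, Set.mem_empty_iff_false, iff_false, not_not]
    exact levyInv_mono h t
  rw [this]
  simp

end Couple
section ConfigSpace

open MeasureTheory
open scoped ENNReal

variable {d : ℕ} {A : Type*} [Fintype A] [Nonempty A]
  [MeasurableSpace A] [MeasurableSingletonClass A]

/-- A value-cylinder set. -/
def cyl (Λ : Finset (Site d)) (y : Site d → A) : Set (Config d A) :=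
  {σ : Config d A | ∀ k ∈ Λ, σ k = y k}

lemma measurableSet_cyl (Λ : Finset (Site d)) (y : Site d → A) :
    MeasurableSet (cyl Λ y) := by
  have : cyl Λ y = ⋂ k ∈ Λ, (fun σ : Config d A => σ k) ⁻¹' {y k} := by
    ext σ; simp [cyl]
  rw [this]
  exact MeasurableSet.biInter (Λ.countable_toSet) fun k _ =>
    (measurable_pi_apply k) (MeasurableSet.singleton (y k))

/-- Cylinders generate the product σ-algebra. -/
lemma generateFrom_cyl :
    (MeasurableSpace.pi : MeasurableSpace (Config d A)) =
      MeasurableSpace.generateFrom {T | ∃ Λ y, T = cyl (d := d) (A := A) Λ y} := by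
  apply le_antisymm
  · rw [MeasurableSpace.pi]
    refine iSup_le fun k => ?_
    rw [← measurable_iff_comap_le]
    refine @measurable_to_countable' A (Config d A) _ _
      (MeasurableSpace.generateFrom {T | ∃ Λ y, T = cyl (d := d) (A := A) Λ y})
      (fun σ => σ k) fun a => ?_
    have : (fun σ : Config d A => σ k) ⁻¹' {a} = cyl {k} (fun _ => a) := by
      ext σ; simp [cyl]
    rw [this]
    exact MeasurableSpace.measurableSet_generateFrom ⟨{k}, fun _ => a, rfl⟩
  · refine MeasurableSpace.generateFrom_le ?_
    rintro T ⟨Λ, y, rfl⟩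
    exact measurableSet_cyl Λ y

lemma isPiSystem_cyl :
    IsPiSystem {T | ∃ Λ y, T = cyl (d := d) (A := A) Λ y} := by
  rintro T1 ⟨Λ1, y1, rfl⟩ T2 ⟨Λ2, y2, rfl⟩ hne
  classical
  obtain ⟨σ₀, hσ1, hσ2⟩ := hne
  refine ⟨Λ1 ∪ Λ2, fun k => if k ∈ Λ1 then y1 k else y2 k, ?_⟩
  ext σ
  simp only [Set.mem_inter_iff, cyl, Set.mem_setOf_eq, Finset.mem_union]
  constructor
  · rintro ⟨h1, h2⟩ k hk
    by_cases hk1 : k ∈ Λ1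
    · rw [if_pos hk1]; exact h1 k hk1
    · rw [if_neg hk1]; exact h2 k (hk.resolve_left hk1)
  · intro h
    constructor
    · intro k hk
      have := h k (Or.inl hk)
      rwa [if_pos hk] at this
    · intro k hk
      have := h k (Or.inr hk)
      by_cases hk1 : k ∈ Λ1
      · rw [if_pos hk1] at this
        rw [this, ← hσ1 k hk1, hσ2 k hk]
      · rwa [if_neg hk1] at this

/-- Two probability measures on configuration space agreeing on all value-cylinders
are equal. -/
lemma config_ext (μ ν : Measure (Config d A)) [IsProbabilityMeasure μ]
    [IsProbabilityMeasure ν]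
    (h : ∀ (Λ : Finset (Site d)) (y : Site d → A), μ (cyl Λ y) = ν (cyl Λ y)) : μ = ν := by
  refine ext_of_generate_finite _ generateFrom_cyl isPiSystem_cyl ?_ (by simp)
  rintro T ⟨Λ, y, rfl⟩
  exact h Λ y

/-- Extension of a partial configuration by a junk value. -/
noncomputable def extC (Λ : Finset (Site d)) (y : (k : ↥Λ) → A) : Config d A :=
  fun k => if h : k ∈ Λ then y ⟨k, h⟩ else Classical.arbitrary A

lemma lintegral_comp_fiber {α β : Type*} [MeasurableSpace α] [Fintype β] [MeasurableSpace β]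
    [MeasurableSingletonClass β] (m : Measure α)
    {p : α → β} (hp : Measurable p) (g : β → ℝ≥0∞) :
    ∫⁻ a, g (p a) ∂m = ∑ b, g b * m (p ⁻¹' {b}) := by
  rw [← lintegral_map (measurable_of_countable g) hp, lintegral_fintype]
  refine Finset.sum_congr rfl fun b _ => ?_
  rw [Measure.map_apply hp (MeasurableSet.singleton b)]

/-- A function depending only on coordinates in `Λ` integrates as a finite sum over
cylinder patterns. -/
lemma lintegral_local (m : Measure (Config d A)) (Λ : Finset (Site d))
    (G : Config d A → ℝ≥0∞)
    (hloc : ∀ σ σ' : Config d A, (∀ k ∈ Λ, σ k = σ' k) → G σ = G σ') :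
    ∫⁻ σ, G σ ∂m = ∑ y : (k : ↥Λ) → A, G (extC Λ y) * m (cyl Λ (extC Λ y)) := by
  classical
  have hp : Measurable fun (σ : Config d A) (k : ↥Λ) => σ k :=
    measurable_pi_lambda _ fun k => measurable_pi_apply _
  have hG : ∀ σ, G σ = G (extC Λ (fun k : ↥Λ => σ k)) := by
    intro σ
    refine hloc _ _ fun k hk => ?_
    simp [extC, hk]
  calc ∫⁻ σ, G σ ∂m = ∫⁻ σ, (fun y : (k : ↥Λ) → A => G (extC Λ y)) ((fun σ (k : ↥Λ) => σ k) σ) ∂m := by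
        refine lintegral_congr fun σ => ?_
        exact hG σ
    _ = ∑ y : (k : ↥Λ) → A, G (extC Λ y) * m ((fun σ (k : ↥Λ) => σ k) ⁻¹' {y}) :=
        lintegral_comp_fiber m hp (fun y : (k : ↥Λ) → A => G (extC Λ y))
    _ = ∑ y : (k : ↥Λ) → A, G (extC Λ y) * m (cyl Λ (extC Λ y)) := by
        refine Finset.sum_congr rfl fun y _ => ?_
        congr 1
        congr 1
        ext σ
        simp only [Set.mem_preimage, Set.mem_singleton_iff, cyl, Set.mem_setOf_eq, funext_iff]
        constructor
        · intro h k hk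
          have := h ⟨k, hk⟩
          simp only [extC, dif_pos hk]
          exact this
        · intro h k
          have := h k.1 k.2
          simpa [extC, k.2] using this

lemma lintegral_ind {α : Type*} [MeasurableSpace α] (m : MeasureTheory.Measure α) {s : Set α}
    (hs : MeasurableSet s) :
    ∫⁻ x, s.indicator (fun _ => (1:ℝ≥0∞)) x ∂m = m s := by
  rw [MeasureTheory.lintegral_indicator hs]
  simp

end ConfigSpace
section PCAGeneric

open MeasureTheory
open scoped ENNReal

variable {d : ℕ} {A : Type*} [Fintype A] [Nonempty A]
  [MeasurableSpace A] [MeasurableSingletonClass A]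
  (R : PCA d A)

lemma PCA.cyl_apply (η : Config d A) (Λ : Finset (Site d)) (y : Site d → A) :
    R.toKernel η (cyl Λ y) = ∏ k ∈ Λ, R.rule k η {y k} :=
  R.product η Λ y

lemma PCA.rule_singleton_eq (k : Site d) (η : Config d A) (a : A) :
    R.rule k η {a} = R.toKernel η (cyl {k} (fun _ => a)) := by
  rw [R.cyl_apply, Finset.prod_singleton]

lemma PCA.measurable_rule_singleton (k : Site d) (a : A) :
    Measurable fun η => R.rule k η {a} := by
  have h : (fun η => R.rule k η {a}) = fun η => R.toKernel η (cyl {k} (fun _ => a)) :=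
    funext fun η => R.rule_singleton_eq k η a
  rw [h]
  exact R.toKernel.measurable_coe (measurableSet_cyl _ _)

open Classical in
lemma sum_ite_measure (μ : Measure A) (B : Set A) :
    ∑ a : A, (if a ∈ B then μ {a} else 0) = μ B := by
  have h1 : ∑ a : A, (if a ∈ B then μ {a} else 0)
      = ∑ a : A, (if a ∈ (Set.toFinite B).toFinset then μ {a} else 0) :=
    Finset.sum_congr rfl fun a _ => if_congr (Set.Finite.mem_toFinset _).symm rfl rfl
  rw [h1, Finset.sum_ite_mem, Finset.univ_inter, ← measure_set_eq_sum]

lemma PCA.measurable_rule_set (k : Site d) (B : Set A) :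
    Measurable fun η => R.rule k η B := by
  classical
  have h : (fun η => R.rule k η B) = fun η => ∑ a : A, (if a ∈ B then R.rule k η {a} else 0) :=
    funext fun η => (sum_ite_measure _ B).symm
  rw [h]
  refine Finset.measurable_sum _ fun a _ => ?_
  by_cases h : a ∈ B
  · simpa [h] using R.measurable_rule_singleton k a
  · simp [h]

/-- Measure of a finite-dimensional rectangle under the kernel. -/
lemma PCA.rect_apply (η : Config d A) (Λ : Finset (Site d)) (B : Site d → Set A) :
    R.toKernel η {ω : Config d A | ∀ k ∈ Λ, ω k ∈ B k} =
      ∏ k ∈ Λ, R.rule k η (B k) := by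
  classical
  haveI := R.markov
  set T : Set (Config d A) := {ω : Config d A | ∀ k ∈ Λ, ω k ∈ B k} with hT
  have hTmeas : MeasurableSet T := by
    have : T = ⋂ k ∈ Λ, (fun σ : Config d A => σ k) ⁻¹' (B k) := by
      ext σ; simp [hT]
    rw [this]
    exact MeasurableSet.biInter (Λ.countable_toSet) fun k _ =>
      (measurable_pi_apply k) (Set.toFinite _).measurableSet
  have h1 : R.toKernel η T = ∫⁻ σ, T.indicator (fun _ => (1:ℝ≥0∞)) σ ∂(R.toKernel η) :=
    (lintegral_ind _ hTmeas).symm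
  rw [h1, lintegral_local _ Λ _ ?hloc]
  case hloc =>
    intro σ σ' hσ
    by_cases h : σ ∈ T
    · have h' : σ' ∈ T := fun k hk => by rw [← hσ k hk]; exact h k hk
      rw [Set.indicator_of_mem h, Set.indicator_of_mem h']
    · have h' : σ' ∉ T := fun hc => h fun k hk => by rw [hσ k hk]; exact hc k hk
      rw [Set.indicator_of_notMem h, Set.indicator_of_notMem h']
  have step : ∀ y : (k : ↥Λ) → A,
      T.indicator (fun _ => (1:ℝ≥0∞)) (extC Λ y) * R.toKernel η (cyl Λ (extC Λ y)) =
        ∏ k : ↥Λ, ((if y k ∈ B k.1 then 1 else 0) * R.rule k.1 η {y k}) := by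
    intro y
    have hext : ∀ k : ↥Λ, extC Λ y k = y k := fun k => by simp [extC, k.2]
    by_cases hcond : ∀ k : ↥Λ, y k ∈ B k.1
    · have h1 : extC Λ y ∈ T := by
        intro k hk
        have := hcond ⟨k, hk⟩
        rwa [← hext ⟨k, hk⟩] at this
      rw [Set.indicator_of_mem h1, R.cyl_apply,
        ← Finset.prod_attach Λ (fun k => R.rule k η {extC Λ y k}), one_mul]
      rw [Finset.univ_eq_attach]
      refine (Finset.prod_congr rfl fun k _ => ?_).symm
      rw [if_pos (hcond k), one_mul, hext k]
    · push_neg at hcond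
      obtain ⟨k₀, hk₀⟩ := hcond
      have h1 : extC Λ y ∉ T := by
        intro hmem
        have := hmem k₀.1 k₀.2
        rw [hext k₀] at this
        exact hk₀ this
      rw [Set.indicator_of_notMem h1, zero_mul]
      symm
      refine Finset.prod_eq_zero (Finset.mem_univ k₀) ?_
      rw [if_neg hk₀, zero_mul]
  simp only [step]
  have hps := Finset.prod_univ_sum (fun _ : ↥Λ => (Finset.univ : Finset A))
    (fun (k : ↥Λ) (a : A) => (if a ∈ B k.1 then 1 else 0) * R.rule k.1 η {a})
  rw [Fintype.piFinset_univ] at hps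
  rw [← hps, ← Finset.prod_attach Λ (fun k => R.rule k η (B k))]
  refine Finset.prod_congr rfl fun k _ => ?_
  rw [← sum_ite_measure (R.rule k.1 η) (B k.1)]
  refine Finset.sum_congr rfl fun a _ => ?_
  by_cases h : a ∈ B k.1 <;> simp [h]

/-- One-point marginal of the kernel. -/
lemma PCA.point_apply (η : Config d A) (x : Site d) (B : Set A) :
    R.toKernel η {ω : Config d A | ω x ∈ B} = R.rule x η B := by
  have : {ω : Config d A | ω x ∈ B} = {ω : Config d A | ∀ k ∈ ({x} : Finset (Site d)), ω k ∈ B} := by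
    ext ω; simp
  rw [this, R.rect_apply η {x} (fun _ => B), Finset.prod_singleton]

end PCAGeneric
section Specific

open MeasureTheory
open scoped ENNReal

variable {d : ℕ} {S : Type} [Fintype S] [LinearOrder S] [Nonempty S]
  [MeasurableSpace S] [MeasurableSingletonClass S]

/-- Monotonicity of the single-site updating rules for an attractive PCA. -/
lemma ruleMono (P : PCA d S) (hA : Attractive P) (k : Site d)
    {ζ ζ' : Config d S} (h : ζ ≤ ζ') (s : S) :
    cdfS (P.rule k ζ') s ≤ cdfS (P.rule k ζ) s := by
  haveI := P.markov
  haveI := P.rule_prob k ζ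
  haveI := P.rule_prob k ζ'
  set T : Set (Config d S) := {σ : Config d S | ¬ σ k ≤ s} with hT
  have hTmeas : MeasurableSet T := by
    have : T = (fun σ : Config d S => σ k) ⁻¹' (Set.Iic s)ᶜ := by
      ext σ; simp [hT]
    rw [this]
    exact (measurable_pi_apply k) (Set.toFinite _).measurableSet.compl
  have hmono : Monotone (T.indicator fun _ => (1:ℝ)) := by
    intro σ σ' hσ
    by_cases hσT : σ ∈ T
    · have hσ'T : σ' ∈ T := by
        simp only [hT, Set.mem_setOf_eq] at hσT ⊢
        intro hc
        exact hσT (le_trans (hσ k) hc)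
      rw [Set.indicator_of_mem hσT, Set.indicator_of_mem hσ'T]
    · rw [Set.indicator_of_notMem hσT]
      exact Set.indicator_apply_nonneg fun _ => zero_le_one
  have hbd : ∃ C, ∀ x, |(T.indicator fun _ => (1:ℝ)) x| ≤ C := by
    refine ⟨1, fun x => ?_⟩
    by_cases hx : x ∈ T
    · rw [Set.indicator_of_mem hx]; norm_num
    · rw [Set.indicator_of_notMem hx]; norm_num
  have hmeas : Measurable (T.indicator fun _ => (1:ℝ)) :=
    measurable_const.indicator hTmeas
  have key := hA _ hmeas hmono hbd h
  have hval : ∀ η : Config d S, ∫ σ, (T.indicator fun _ => (1:ℝ)) σ ∂(P.toKernel η)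
      = 1 - cdfS (P.rule k η) s := by
    intro η
    haveI := P.rule_prob k η
    rw [integral_indicator_const (1:ℝ) hTmeas]
    have h1 : P.toKernel η T = P.rule k η (Set.Iic s)ᶜ := by
      have : T = {ω : Config d S | ω k ∈ (Set.Iic s)ᶜ} := by ext σ; simp [hT]
      rw [this, P.point_apply]
    have h2 : P.rule k η (Set.Iic s)ᶜ = 1 - P.rule k η (Set.Iic s) :=
      prob_compl_eq_one_sub (Set.toFinite _).measurableSet
    have h3 : cdfS (P.rule k η) s = (P.rule k η (Set.Iic s)).toReal := rfl
    rw [measureReal_def, h1, h2, h3, ENNReal.toReal_sub_of_le prob_le_one ENNReal.one_ne_top]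
    simp
  simp only [hval] at key
  linarith

/-- The event that a pair configuration is (everywhere) ordered. -/
def OrdSet {d : ℕ} (S : Type) [Preorder S] : Set (Config d (S × S)) :=
  {ω : Config d (S × S) | ∀ x, (ω x).1 ≤ (ω x).2}

lemma measurableSet_OrdSet : MeasurableSet (OrdSet (d := d) S) := by
  have : OrdSet (d := d) S = ⋂ x : Site d,
      (fun ω : Config d (S × S) => ω x) ⁻¹' {p : S × S | p.1 ≤ p.2} := by
    ext ω; simp [OrdSet]
  rw [this]
  exact MeasurableSet.iInter fun x =>
    (measurable_pi_apply x) (Set.toFinite _).measurableSet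

/-- One step of the pair dynamics preserves orderedness. -/
lemma step_ord (P : PCA d S) (hA : Attractive P) (Q : PCA d (S × S))
    (hQ : ∀ (k : Site d) (η : Config d (S × S)),
      Q.rule k η = couple (P.rule k fun x => (η x).1) (P.rule k fun x => (η x).2))
    {η : Config d (S × S)} (hη : η ∈ OrdSet (d := d) S) :
    Q.toKernel η (OrdSet (d := d) S)ᶜ = 0 := by
  have hcompl : (OrdSet (d := d) S)ᶜ = ⋃ x : Site d,
      {ω : Config d (S × S) | ω x ∈ {p : S × S | ¬ p.1 ≤ p.2}} := by
    ext ω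
    simp [OrdSet, not_forall]
  rw [hcompl]
  refine measure_iUnion_null fun x => ?_
  rw [Q.point_apply, hQ]
  haveI := P.rule_prob x (fun y => (η y).1)
  haveI := P.rule_prob x (fun y => (η y).2)
  exact couple_ordered fun s => ruleMono P hA x (fun y => hη y) s

lemma iterLaw_prob {α : Type*} [MeasurableSpace α] (K : Kernel α α) [IsMarkovKernel K]
    (μ : Measure α) [IsProbabilityMeasure μ] (n : ℕ) :
    IsProbabilityMeasure (iterLaw K μ n) := by
  induction n with
  | zero => exact ‹_›
  | succ n ih =>
    constructor
    rw [iterLaw, Measure.bind_apply MeasurableSet.univ K.measurable.aemeasurable]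
    have : ∀ a, K a Set.univ = 1 := fun a => measure_univ
    simp only [this]
    rw [lintegral_one]
    exact ih.measure_univ

lemma map_bind' {α β γ : Type*} [MeasurableSpace α] [MeasurableSpace β] [MeasurableSpace γ]
    (μ : Measure α) (K : α → Measure β) (hK : Measurable K) {g : β → γ} (hg : Measurable g) :
    (μ.bind K).map g = μ.bind fun a => (K a).map g := by
  rw [← Measure.bind_dirac_eq_map _ hg, Measure.bind_bind (g := fun b => Measure.dirac (g b)) hK.aemeasurable (Measure.measurable_dirac.comp hg).aemeasurable]
  refine congrArg _ (funext fun a => ?_)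
  rw [Measure.bind_dirac_eq_map _ hg]

lemma bind_map' {α β γ : Type*} [MeasurableSpace α] [MeasurableSpace β] [MeasurableSpace γ]
    (μ : Measure α) (K : β → Measure γ) (hK : Measurable K) {g : α → β} (hg : Measurable g) :
    (μ.map g).bind K = μ.bind fun a => K (g a) := by
  rw [← Measure.bind_dirac_eq_map _ hg,
    Measure.bind_bind (f := fun a => Measure.dirac (g a)) (Measure.measurable_dirac.comp hg).aemeasurable hK.aemeasurable]
  refine congrArg _ (funext fun a => ?_)
  rw [Measure.dirac_bind hK]

lemma iterLaw_add {α : Type*} [MeasurableSpace α] (K : Kernel α α) (μ : Measure α)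
    (m n : ℕ) : iterLaw K (iterLaw K μ m) n = iterLaw K μ (m + n) := by
  induction n with
  | zero => rfl
  | succ n ih => rw [iterLaw, ih]; rfl

lemma iterLaw_lintegral {α : Type*} [MeasurableSpace α] (K : Kernel α α)
    (G : ℕ → α → ℝ≥0∞) (hGmeas : ∀ m, Measurable (G m))
    (hGrec : ∀ m η, G (m + 1) η = ∫⁻ ω, G m ω ∂(K η))
    (μ : Measure α) (m n : ℕ) :
    ∫⁻ ω, G m ω ∂(iterLaw K μ n) = ∫⁻ ω, G (m + n) ω ∂μ := by
  induction n generalizing m with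
  | zero => rfl
  | succ n ih =>
    rw [iterLaw, Measure.lintegral_bind K.measurable.aemeasurable (hGmeas m).aemeasurable]
    have : ∀ a, ∫⁻ ω, G m ω ∂(K a) = G (m + 1) a := fun a => (hGrec m a).symm
    simp only [this]
    rw [ih (m + 1)]
    have hidx : m + 1 + n = m + (n + 1) := by omega
    rw [hidx]

end Specific
section GoodM

open MeasureTheory
open scoped ENNReal

variable {d : ℕ} {S : Type} [Fintype S] [LinearOrder S] [Nonempty S]
  [MeasurableSpace S] [MeasurableSingletonClass S]

/-- Twisted ordering on pair configurations. -/
def twLE {d : ℕ} {S : Type} [Preorder S] (ω ω' : Config d (S × S)) : Prop :=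
  ∀ x, (ω' x).1 ≤ (ω x).1 ∧ (ω x).2 ≤ (ω' x).2

/-- The class of functions stable under the pair dynamics. -/
structure GoodFn {d : ℕ} {S : Type} [Fintype S] [LinearOrder S] [Nonempty S]
    [MeasurableSpace S] [MeasurableSingletonClass S]
    (G : Config d (S × S) → ℝ≥0∞) : Prop where
  meas : Measurable G
  loc : ∃ Λ : Finset (Site d), ∀ σ σ' : Config d (S × S), (∀ k ∈ Λ, σ k = σ' k) → G σ = G σ'
  mono : ∀ ω ω', twLE ω ω' → G ω ≤ G ω'

variable (P : PCA d S) (Q : PCA d (S × S))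

lemma good_step (hA : Attractive P)
    (hQ : ∀ (k : Site d) (η : Config d (S × S)),
      Q.rule k η = couple (P.rule k fun x => (η x).1) (P.rule k fun x => (η x).2))
    {G : Config d (S × S) → ℝ≥0∞} (hG : GoodFn G) :
    GoodFn (fun η => ∫⁻ ω, G ω ∂(Q.toKernel η)) := by
  haveI := Q.markov
  obtain ⟨Λ, hloc⟩ := hG.loc
  have formula : ∀ η, ∫⁻ ω, G ω ∂(Q.toKernel η)
      = ∑ y : (k : ↥Λ) → (S × S), G (extC Λ y) * ∏ k ∈ Λ, Q.rule k η {extC Λ y k} := by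
    intro η
    haveI : IsProbabilityMeasure (Q.toKernel η) := by infer_instance
    rw [lintegral_local _ Λ G hloc]
    exact Finset.sum_congr rfl fun y _ => by rw [Q.cyl_apply]
  have rep : ∀ ζ : Config d (S × S), ∫⁻ ω, G ω ∂(Q.toKernel ζ)
      = ∫⁻ t : (k : ↥Λ) → ℝ, G (extC Λ (fun k : ↥Λ =>
          (levyInv (P.rule k (fun x => (ζ x).1)) (t k),
           levyInv (P.rule k (fun x => (ζ x).2)) (t k))))
        ∂(Measure.pi fun _ : ↥Λ => volume.restrict (Set.Ioo (0:ℝ) 1)) := by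
    intro ζ
    haveI h1 : ∀ k : Site d, IsProbabilityMeasure (P.rule k fun x => (ζ x).1) :=
      fun k => P.rule_prob _ _
    haveI h2 : ∀ k : Site d, IsProbabilityMeasure (P.rule k fun x => (ζ x).2) :=
      fun k => P.rule_prob _ _
    set q : ((k : ↥Λ) → ℝ) → ((k : ↥Λ) → S × S) := fun t k =>
      (levyInv (P.rule k (fun x => (ζ x).1)) (t k),
       levyInv (P.rule k (fun x => (ζ x).2)) (t k)) with hq_def
    have hq : Measurable q := by
      refine measurable_pi_lambda _ fun k => Measurable.prodMk ?_ ?_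
      · exact (measurable_levyInv _).comp (measurable_pi_apply k)
      · exact (measurable_levyInv _).comp (measurable_pi_apply k)
    have hrhs : ∫⁻ t, G (extC Λ (q t))
          ∂(Measure.pi fun _ : ↥Λ => volume.restrict (Set.Ioo (0:ℝ) 1))
        = ∑ y : (k : ↥Λ) → (S × S), G (extC Λ y) *
            (Measure.pi fun _ : ↥Λ => volume.restrict (Set.Ioo (0:ℝ) 1)) (q ⁻¹' {y}) :=
      lintegral_comp_fiber _ hq (fun y => G (extC Λ y))
    rw [hrhs, formula ζ]
    refine Finset.sum_congr rfl fun y _ => ?_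
    congr 1
    have hpre : q ⁻¹' {y} = Set.univ.pi (fun k : ↥Λ => {u : ℝ |
        (levyInv (P.rule k (fun x => (ζ x).1)) u,
         levyInv (P.rule k (fun x => (ζ x).2)) u) = y k}) := by
      ext t
      simp only [Set.mem_preimage, Set.mem_singleton_iff, Set.mem_pi, Set.mem_univ,
        true_implies, Set.mem_setOf_eq, hq_def, funext_iff]
    rw [hpre, Measure.pi_pi, ← Finset.prod_attach Λ (fun k => Q.rule k ζ {extC Λ y k}),
      ← Finset.univ_eq_attach]
    refine Finset.prod_congr rfl fun k _ => ?_
    have hext : extC Λ y k.1 = y k := by simp [extC, k.2]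
    rw [hext, hQ, couple_apply]
    rfl
  refine ⟨?_, ⟨Λ.biUnion (fun k => (Q.rule_local k).choose), fun η η' hη => ?_⟩, fun η η' hηη' => ?_⟩
  · have heq : (fun η => ∫⁻ ω, G ω ∂(Q.toKernel η)) = fun η =>
        ∑ y : (k : ↥Λ) → (S × S), G (extC Λ y) * ∏ k ∈ Λ, Q.rule k η {extC Λ y k} :=
      funext formula
    rw [heq]
    refine Finset.measurable_sum _ fun y _ => ?_
    exact (Finset.measurable_prod Λ fun k _ => Q.measurable_rule_singleton k _).const_mul _
  · rw [formula, formula]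
    refine Finset.sum_congr rfl fun y _ => ?_
    congr 1
    refine Finset.prod_congr rfl fun k hk => ?_
    have := (Q.rule_local k).choose_spec η η'
      (fun j hj => hη j (Finset.mem_biUnion.2 ⟨k, hk, hj⟩))
    rw [this]
  · rw [rep η, rep η']
    refine lintegral_mono fun t => ?_
    refine hG.mono _ _ fun x => ?_
    by_cases hx : x ∈ Λ
    · simp only [extC, dif_pos hx]
      haveI := P.rule_prob x (fun z => (η z).1)
      haveI := P.rule_prob x (fun z => (η' z).1)
      haveI := P.rule_prob x (fun z => (η z).2)
      haveI := P.rule_prob x (fun z => (η' z).2)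
      constructor
      · exact levyInv_mono (fun s => ruleMono P hA x (fun z => (hηη' z).1) s) _
      · exact levyInv_mono (fun s => ruleMono P hA x (fun z => (hηη' z).2) s) _
    · simp only [extC, dif_neg hx]
      exact ⟨le_refl _, le_refl _⟩

/-- First-coordinate projection of a pair configuration. -/
def mapFst {d : ℕ} {S : Type} : Config d (S × S) → Config d S := fun ω x => (ω x).1
def mapSnd {d : ℕ} {S : Type} : Config d (S × S) → Config d S := fun ω x => (ω x).2

lemma measurable_mapFst : Measurable (mapFst (d := d) (S := S)) :=
  measurable_pi_lambda _ fun x => measurable_fst.comp (measurable_pi_apply x)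

lemma measurable_mapSnd : Measurable (mapSnd (d := d) (S := S)) :=
  measurable_pi_lambda _ fun x => measurable_snd.comp (measurable_pi_apply x)

lemma kernel_marg_fst
    (hQ : ∀ (k : Site d) (η : Config d (S × S)),
      Q.rule k η = couple (P.rule k fun x => (η x).1) (P.rule k fun x => (η x).2))
    (η : Config d (S × S)) :
    (Q.toKernel η).map mapFst = P.toKernel (mapFst η) := by
  haveI := Q.markov
  haveI := P.markov
  haveI : IsProbabilityMeasure ((Q.toKernel η).map mapFst) :=
    Measure.isProbabilityMeasure_map measurable_mapFst.aemeasurable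
  refine config_ext _ _ fun Λ y => ?_
  rw [Measure.map_apply measurable_mapFst (measurableSet_cyl Λ y)]
  have hpre : mapFst ⁻¹' (cyl Λ y) =
      {ω : Config d (S × S) | ∀ k ∈ Λ, ω k ∈ (Prod.fst ⁻¹' {y k} : Set (S × S))} := by
    ext ω; simp [cyl, mapFst]
  rw [hpre, Q.rect_apply, P.cyl_apply]
  refine Finset.prod_congr rfl fun k _ => ?_
  haveI := P.rule_prob k (fun x => (η x).1)
  haveI := P.rule_prob k (fun x => (η x).2)
  rw [hQ, couple_fst_apply]
  rfl

lemma kernel_marg_snd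
    (hQ : ∀ (k : Site d) (η : Config d (S × S)),
      Q.rule k η = couple (P.rule k fun x => (η x).1) (P.rule k fun x => (η x).2))
    (η : Config d (S × S)) :
    (Q.toKernel η).map mapSnd = P.toKernel (mapSnd η) := by
  haveI := Q.markov
  haveI := P.markov
  haveI : IsProbabilityMeasure ((Q.toKernel η).map mapSnd) :=
    Measure.isProbabilityMeasure_map measurable_mapSnd.aemeasurable
  refine config_ext _ _ fun Λ y => ?_
  rw [Measure.map_apply measurable_mapSnd (measurableSet_cyl Λ y)]
  have hpre : mapSnd ⁻¹' (cyl Λ y) =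
      {ω : Config d (S × S) | ∀ k ∈ Λ, ω k ∈ (Prod.snd ⁻¹' {y k} : Set (S × S))} := by
    ext ω; simp [cyl, mapSnd]
  rw [hpre, Q.rect_apply, P.cyl_apply]
  refine Finset.prod_congr rfl fun k _ => ?_
  haveI := P.rule_prob k (fun x => (η x).1)
  haveI := P.rule_prob k (fun x => (η x).2)
  rw [hQ, couple_snd_apply]
  rfl

lemma iter_marg
    (hQ : ∀ (k : Site d) (η : Config d (S × S)),
      Q.rule k η = couple (P.rule k fun x => (η x).1) (P.rule k fun x => (η x).2))
    (μ : Measure (Config d (S × S))) (n : ℕ) :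
    ((iterLaw Q.toKernel μ n).map mapFst = iterLaw P.toKernel (μ.map mapFst) n)
    ∧ ((iterLaw Q.toKernel μ n).map mapSnd = iterLaw P.toKernel (μ.map mapSnd) n) := by
  induction n with
  | zero => exact ⟨rfl, rfl⟩
  | succ n ih =>
    constructor
    · show ((iterLaw Q.toKernel μ n).bind (fun a => Q.toKernel a)).map mapFst = _
      rw [map_bind' _ _ Q.toKernel.measurable measurable_mapFst]
      have : (fun a => (Q.toKernel a).map mapFst) = fun a => P.toKernel (mapFst a) :=
        funext fun a => kernel_marg_fst P Q hQ a
      rw [this, ← bind_map' _ _ P.toKernel.measurable measurable_mapFst, ih.1]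
      rfl
    · show ((iterLaw Q.toKernel μ n).bind (fun a => Q.toKernel a)).map mapSnd = _
      rw [map_bind' _ _ Q.toKernel.measurable measurable_mapSnd]
      have : (fun a => (Q.toKernel a).map mapSnd) = fun a => P.toKernel (mapSnd a) :=
        funext fun a => kernel_marg_snd P Q hQ a
      rw [this, ← bind_map' _ _ P.toKernel.measurable measurable_mapSnd, ih.2]
      rfl

end GoodM
section Translate

open MeasureTheory
open scoped ENNReal

variable {d : ℕ} {A : Type*} [Fintype A] [Nonempty A]
  [MeasurableSpace A] [MeasurableSingletonClass A]

/-- The shift by `k` on configurations. -/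
def θ (k : Site d) : Config d A → Config d A := fun σ x => σ (x + k)

lemma measurable_θ (k : Site d) : Measurable (θ (A := A) k) :=
  measurable_pi_lambda _ fun x => measurable_pi_apply (x + k)

lemma rule_shift (R : PCA d A) (hTIR : ∀ (k : Site d) (η : Config d A),
      R.rule k η = R.rule 0 fun x => η (x + k))
    (j k : Site d) (η : Config d A) : R.rule (j + k) η = R.rule j (θ k η) := by
  rw [hTIR (j + k) η, hTIR j (θ k η)]
  congr 1
  funext x
  show η (x + (j + k)) = η ((x + j) + k)
  rw [add_assoc]

lemma kernel_shift (R : PCA d A) (hTIR : ∀ (k : Site d) (η : Config d A),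
      R.rule k η = R.rule 0 fun x => η (x + k))
    (k : Site d) (η : Config d A) :
    (R.toKernel η).map (θ k) = R.toKernel (θ k η) := by
  classical
  haveI := R.markov
  haveI : IsProbabilityMeasure ((R.toKernel η).map (θ k)) :=
    Measure.isProbabilityMeasure_map (measurable_θ k).aemeasurable
  refine config_ext _ _ fun Λ y => ?_
  rw [Measure.map_apply (measurable_θ k) (measurableSet_cyl Λ y)]
  have hpre : θ (A := A) k ⁻¹' (cyl Λ y) = cyl (Λ.image (· + k)) (fun i => y (i - k)) := by
    ext σ
    simp only [Set.mem_preimage, cyl, Set.mem_setOf_eq, Finset.mem_image]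
    constructor
    · rintro h i ⟨j, hj, rfl⟩
      have := h j hj
      simpa [θ, add_sub_cancel_right] using this
    · intro h j hj
      have := h (j + k) ⟨j, hj, rfl⟩
      simpa [θ, add_sub_cancel_right] using this
  rw [hpre, R.cyl_apply, R.cyl_apply]
  rw [Finset.prod_image (by intro a _ b _ hab; exact add_right_cancel hab)]
  refine Finset.prod_congr rfl fun j _ => ?_
  rw [add_sub_cancel_right, rule_shift R hTIR j k η]

lemma iter_shift (R : PCA d A) (hTIR : ∀ (k : Site d) (η : Config d A),
      R.rule k η = R.rule 0 fun x => η (x + k))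
    (c : A) (k : Site d) (n : ℕ) :
    (iterLaw R.toKernel (Measure.dirac (fun _ => c)) n).map (θ k)
      = iterLaw R.toKernel (Measure.dirac (fun _ => c)) n := by
  induction n with
  | zero =>
    show (Measure.dirac (fun _ => c)).map (θ k) = _
    rw [Measure.map_dirac' (measurable_θ k)]
    rfl
  | succ n ih =>
    show ((iterLaw R.toKernel (Measure.dirac fun _ => c) n).bind
        (fun a => R.toKernel a)).map (θ k) = _
    rw [map_bind' _ _ R.toKernel.measurable (measurable_θ k)]
    have h1 : (fun a => (R.toKernel a).map (θ k)) = fun a => R.toKernel (θ k a) :=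
      funext fun a => kernel_shift R hTIR k a
    rw [h1, ← bind_map' _ _ R.toKernel.measurable (measurable_θ k), ih]
    rfl

end Translate
section Osc

open Filter

variable {d : ℕ} {S : Type} [TopologicalSpace S] [DiscreteTopology S]

lemma le_varAt {f : Config d S → ℝ} {C : ℝ} (hC : ∀ x, |f x| ≤ C) {k : Site d}
    {σ η : Config d S} (h : ∀ k' : Site d, k' ≠ k → σ k' = η k') :
    |f σ - f η| ≤ varAt f k := by
  refine le_csSup ⟨2 * C, ?_⟩ ⟨σ, η, h, rfl⟩
  rintro r ⟨σ', η', _, rfl⟩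
  calc |f σ' - f η'| ≤ |f σ'| + |f η'| := abs_sub _ _
    _ ≤ 2 * C := by have := hC σ'; have := hC η'; linarith

lemma varAt_nonneg {f : Config d S → ℝ} {C : ℝ} (hC : ∀ x, |f x| ≤ C) [Nonempty S]
    (k : Site d) : 0 ≤ varAt f k := by
  have h : (0:ℝ) = |f (Classical.arbitrary _) - f (Classical.arbitrary _)| := by simp
  rw [h]
  exact le_varAt hC fun k' _ => rfl

lemma telescope {f : Config d S → ℝ} {C : ℝ} (hC : ∀ x, |f x| ≤ C)
    (Δ : Finset (Site d)) :
    ∀ a c : Config d S, (∀ k ∉ Δ, a k = c k) → |f a - f c| ≤ ∑ k ∈ Δ, varAt f k := by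
  classical
  induction Δ using Finset.induction with
  | empty =>
    intro a c h
    have : a = c := funext fun k => h k (by simp)
    simp [this]
  | @insert k Δ hk ih =>
    intro a c h
    set b := Function.update c k (a k) with hb
    have hab : ∀ j ∉ Δ, a j = b j := by
      intro j hj
      by_cases hjk : j = k
      · subst hjk; simp [hb]
      · rw [hb, Function.update_of_ne hjk]
        exact h j (by simp [hjk, hj])
    have hbc : ∀ j : Site d, j ≠ k → b j = c j := fun j hj => Function.update_of_ne hj _ _
    calc |f a - f c| ≤ |f a - f b| + |f b - f c| := abs_sub_le _ _ _
      _ ≤ (∑ j ∈ Δ, varAt f j) + varAt f k := add_le_add (ih a b hab) (le_varAt hC hbc)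
      _ = ∑ j ∈ insert k Δ, varAt f j := by rw [Finset.sum_insert hk]; ring

lemma osc_bound [DecidableEq S] {f : Config d S → ℝ} (hf : Continuous f) {C : ℝ} (hC : ∀ x, |f x| ≤ C)
    (hsum : Summable fun k : Site d => varAt f k) [Nonempty S] (a b : Config d S) :
    |f a - f b| ≤ ∑' k : Site d, varAt f k * (if a k = b k then 0 else 1) := by
  classical
  set w : Site d → ℝ := fun k => varAt f k * (if a k = b k then 0 else 1) with hw
  have hw0 : ∀ k, 0 ≤ w k := by
    intro k
    rw [hw]
    by_cases h : a k = b k <;> simp [h, varAt_nonneg hC]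
  have hwle : ∀ k, w k ≤ varAt f k := by
    intro k
    rw [hw]
    by_cases h : a k = b k <;> simp [h, varAt_nonneg hC]
  have hws : Summable w := Summable.of_nonneg_of_le hw0 hwle hsum
  refine le_of_forall_pos_le_add fun ε hε => ?_
  have hO : IsOpen (f ⁻¹' Metric.ball (f b) ε) := (Metric.isOpen_ball).preimage hf
  have hbO : b ∈ f ⁻¹' Metric.ball (f b) ε := by
    simp [Metric.mem_ball, hε]
  obtain ⟨I, u, hu, hsub⟩ := isOpen_pi_iff.1 hO b hbO
  set c : Config d S := fun k => if k ∈ I then b k else a k with hc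
  have hcO : c ∈ f ⁻¹' Metric.ball (f b) ε := by
    refine hsub ?_
    intro i hi
    show (if i ∈ I then b i else a i) ∈ u i
    rw [if_pos (Finset.mem_coe.1 hi)]
    exact (hu i hi).2
  have h1 : |f c - f b| ≤ ε := by
    have := hcO
    simp only [Set.mem_preimage, Metric.mem_ball, Real.dist_eq] at this
    exact le_of_lt this
  set Δ : Finset (Site d) := I.filter (fun k => a k ≠ b k) with hΔ
  have h2 : |f a - f c| ≤ ∑ k ∈ Δ, varAt f k := by
    refine telescope hC Δ a c fun k hkΔ => ?_
    by_cases hkI : k ∈ I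
    · have : a k = b k := by
        by_contra hne
        exact hkΔ (Finset.mem_filter.2 ⟨hkI, hne⟩)
      rw [hc]; simp [hkI, this]
    · rw [hc]; simp [hkI]
  have h3 : ∑ k ∈ Δ, varAt f k ≤ ∑' k, w k := by
    have heq : ∑ k ∈ Δ, varAt f k = ∑ k ∈ Δ, w k := by
      refine Finset.sum_congr rfl fun k hkΔ => ?_
      have : ¬ a k = b k := (Finset.mem_filter.1 hkΔ).2
      rw [hw]
      simp [this]
    rw [heq]
    exact Summable.sum_le_tsum Δ (fun k _ => hw0 k) hws
  calc |f a - f b| ≤ |f a - f c| + |f c - f b| := abs_sub_le _ _ _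
    _ ≤ (∑' k, w k) + ε := add_le_add (le_trans h2 h3) h1

end Osc
open scoped ENNReal

/-- Exponential-type ergodicity bound: for an ergodic attractive
translation-invariant PCA with unique stationary measure `ν`, the deviation of the law
at time `n` from `ν` tested against `f` is bounded by `2 |||f||| ρ(n)`. -/
theorem stmt17 {d : ℕ} (hd : 1 ≤ d)
    {S : Type} [Fintype S] [LinearOrder S] [Nonempty S]
    [MeasurableSpace S] [MeasurableSingletonClass S]
    [TopologicalSpace S] [DiscreteTopology S]
    (P : PCA d S) (hA : Attractive P) (hTI : TranslationInvariant P)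
    (ν : Measure (Config d S)) (hν : IsProbabilityMeasure ν)
    (herg : ∀ σ : Config d S, ∀ f : BoundedContinuousFunction (Config d S) ℝ,
      Tendsto (fun n => ∫ x, f x ∂iterLaw P.toKernel (Measure.dirac σ) n)
        atTop (nhds (∫ x, f x ∂ν)))
    (Q : PCA d (S × S))
    (hQ : ∀ (k : Site d) (η : Config d (S × S)),
      Q.rule k η = couple (P.rule k fun x => (η x).1) (P.rule k fun x => (η x).2))
    (f : Config d S → ℝ) (hf : Continuous f) (hsum : Summable fun k : Site d => varAt f k)
    (n : ℕ) (hn : 1 ≤ n) (σ : Config d S) :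
    |(∫ x, f x ∂iterLaw P.toKernel (Measure.dirac σ) n) - ∫ x, f x ∂ν| ≤
      2 * (∑' k : Site d, varAt f k) *
        (iterLaw Q.toKernel (Measure.dirac fun _ => (botS S, topS S)) n
          {ω : Config d (S × S) | (ω 0).1 ≠ (ω 0).2}).toReal := by
  classical
  haveI := P.markov
  haveI := Q.markov
  -- boundedness of f
  set fbc : BoundedContinuousFunction (Config d S) ℝ :=
    BoundedContinuousFunction.mkOfCompact ⟨f, hf⟩ with hfbc
  have hC : ∀ x, |f x| ≤ ‖fbc‖ := fun x => by
    have := BoundedContinuousFunction.norm_coe_le_norm fbc x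
    simpa [hfbc, Real.norm_eq_abs] using this
  set C : ℝ := ‖fbc‖
  have hfm : Measurable f := hf.measurable
  -- notation
  set Kq := Q.toKernel with hKq
  set ηbt : Config d (S × S) := (fun _ => (botS S, topS S)) with hηbt
  set ρ : ℝ≥0∞ :=
    iterLaw Kq (Measure.dirac ηbt) n {ω : Config d (S × S) | (ω 0).1 ≠ (ω 0).2} with hρ
  set V : ℝ := ∑' k : Site d, varAt f k with hV
  have hV0 : 0 ≤ V := tsum_nonneg fun k => varAt_nonneg hC k
  -- measurable events
  have hLtmeas : ∀ k : Site d, MeasurableSet {ω : Config d (S × S) | (ω k).1 < (ω k).2} := by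
    intro k
    have hs : {ω : Config d (S × S) | (ω k).1 < (ω k).2}
        = (fun ω : Config d (S × S) => ω k) ⁻¹' {p : S × S | p.1 < p.2} := rfl
    rw [hs]
    exact (measurable_pi_apply k) (Set.toFinite _).measurableSet
  have hNemeas : ∀ k : Site d, MeasurableSet {ω : Config d (S × S) | (ω k).1 ≠ (ω k).2} := by
    intro k
    have hs : {ω : Config d (S × S) | (ω k).1 ≠ (ω k).2}
        = (fun ω : Config d (S × S) => ω k) ⁻¹' {p : S × S | p.1 ≠ p.2} := rfl
    rw [hs]
    exact (measurable_pi_apply k) (Set.toFinite _).measurableSet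
  -- the good sequence
  set G0 : Site d → Config d (S × S) → ℝ≥0∞ :=
    fun k => ({ω : Config d (S × S) | (ω k).1 < (ω k).2}).indicator (fun _ => 1) with hG0
  set Gs : Site d → ℕ → Config d (S × S) → ℝ≥0∞ :=
    fun k m => Nat.rec (G0 k) (fun _ Gm η => ∫⁻ ω, Gm ω ∂(Kq η)) m with hGs
  have hGsrec : ∀ k m η, Gs k (m + 1) η = ∫⁻ ω, Gs k m ω ∂(Kq η) := fun k m η => rfl
  have hGood0 : ∀ k, GoodFn (G0 k) := by
    intro k
    refine ⟨measurable_const.indicator (hLtmeas k), ⟨{k}, fun ω ω' h => ?_⟩, fun ω ω' h => ?_⟩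
    · have hk := h k (Finset.mem_singleton_self k)
      by_cases hω : ω ∈ {ω : Config d (S × S) | (ω k).1 < (ω k).2}
      · have hω' : ω' ∈ {ω : Config d (S × S) | (ω k).1 < (ω k).2} := by
          simp only [Set.mem_setOf_eq] at hω ⊢
          rwa [← hk]
        simp only [hG0]
        rw [Set.indicator_of_mem hω, Set.indicator_of_mem hω']
      · have hω' : ω' ∉ {ω : Config d (S × S) | (ω k).1 < (ω k).2} := by
          simp only [Set.mem_setOf_eq] at hω ⊢
          rwa [← hk]
        simp only [hG0]
        rw [Set.indicator_of_notMem hω, Set.indicator_of_notMem hω']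
    · by_cases hω : ω ∈ {ω : Config d (S × S) | (ω k).1 < (ω k).2}
      · have hω' : ω' ∈ {ω : Config d (S × S) | (ω k).1 < (ω k).2} :=
          lt_of_le_of_lt (h k).1 (lt_of_lt_of_le hω (h k).2)
        simp only [hG0]
        rw [Set.indicator_of_mem hω, Set.indicator_of_mem hω']
      · simp only [hG0]
        rw [Set.indicator_of_notMem hω]
        exact zero_le
  have hGood : ∀ k m, GoodFn (Gs k m) := by
    intro k m
    induction m with
    | zero => exact hGood0 k
    | succ m ih => exact good_step P Q hA hQ ih
  -- chain identity
  have hchain : ∀ (k : Site d) (μ0 : Measure (Config d (S × S))),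
      ∫⁻ ω, G0 k ω ∂(iterLaw Kq μ0 n) = ∫⁻ η, Gs k n η ∂μ0 := by
    intro k μ0
    have h := iterLaw_lintegral Kq (Gs k) (fun m => (hGood k m).meas)
      (fun m η => hGsrec k m η) μ0 0 n
    rw [zero_add] at h; exact h
  -- twisted bound
  have htw : ∀ (k : Site d) (η : Config d (S × S)), Gs k n η ≤ Gs k n ηbt := by
    intro k η
    exact (hGood k n).mono η ηbt fun x => ⟨botS_le _, le_topS _⟩
  -- value at the extremal pair
  have hval : ∀ k : Site d, Gs k n ηbt
      = iterLaw Kq (Measure.dirac ηbt) n {ω : Config d (S × S) | (ω k).1 < (ω k).2} := by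
    intro k
    have h := hchain k (Measure.dirac ηbt)
    rw [lintegral_ind _ (hLtmeas k), lintegral_dirac' _ (hGood k n).meas] at h
    exact h.symm
  -- translation invariance of Q's rules
  have hTIQ : ∀ (k : Site d) (η : Config d (S × S)),
      Q.rule k η = Q.rule 0 fun x => η (x + k) := by
    intro k η
    rw [hQ, hQ, hTI k (fun x => (η x).1), hTI k (fun x => (η x).2)]
  have hρk : ∀ k : Site d,
      iterLaw Kq (Measure.dirac ηbt) n {ω : Config d (S × S) | (ω k).1 ≠ (ω k).2} = ρ := by
    intro k
    have hshift := iter_shift Q hTIQ (botS S, topS S) k n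
    have hpre : θ (A := S × S) k ⁻¹' {ω : Config d (S × S) | (ω 0).1 ≠ (ω 0).2}
        = {ω : Config d (S × S) | (ω k).1 ≠ (ω k).2} := by
      ext ω; simp [θ, zero_add]
    calc iterLaw Kq (Measure.dirac ηbt) n {ω : Config d (S × S) | (ω k).1 ≠ (ω k).2}
        = iterLaw Kq (Measure.dirac ηbt) n
            (θ (A := S × S) k ⁻¹' {ω : Config d (S × S) | (ω 0).1 ≠ (ω 0).2}) := by rw [hpre]
      _ = (iterLaw Kq (Measure.dirac ηbt) n).map (θ (A := S × S) k)
            {ω : Config d (S × S) | (ω 0).1 ≠ (ω 0).2} :=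
          (Measure.map_apply (measurable_θ k) (hNemeas 0)).symm
      _ = ρ := by
          rw [hρ, hηbt, hKq, hshift]
  -- orderedness propagation
  have hOrd : ∀ (μ0 : Measure (Config d (S × S))), μ0 (OrdSet (d := d) S)ᶜ = 0 →
      ∀ m, iterLaw Kq μ0 m (OrdSet (d := d) S)ᶜ = 0 := by
    intro μ0 h0 m
    induction m with
    | zero => exact h0
    | succ m ih =>
      show ((iterLaw Kq μ0 m).bind fun a => Kq a) (OrdSet (d := d) S)ᶜ = 0
      rw [Measure.bind_apply measurableSet_OrdSet.compl Kq.measurable.aemeasurable]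
      have hae : (fun a => Kq a (OrdSet (d := d) S)ᶜ) =ᵐ[iterLaw Kq μ0 m] (fun _ => 0) := by
        have hmem : ∀ᵐ a ∂(iterLaw Kq μ0 m), a ∈ OrdSet (d := d) S := by
          rw [MeasureTheory.ae_iff]
          exact ih
        filter_upwards [hmem] with a ha
        exact step_ord P hA Q hQ ha
      rw [lintegral_congr_ae hae, lintegral_zero]
  -- the central estimate
  have key : ∀ (μ0 : Measure (Config d (S × S))), IsProbabilityMeasure μ0 →
      μ0 (OrdSet (d := d) S)ᶜ = 0 →
      |(∫ x, f x ∂((iterLaw Kq μ0 n).map mapFst))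
        - ∫ x, f x ∂((iterLaw Kq μ0 n).map mapSnd)| ≤ V * ρ.toReal := by
    intro μ0 hμ0p hμ0ord
    haveI := hμ0p
    haveI : IsProbabilityMeasure (iterLaw Kq μ0 n) := iterLaw_prob Kq μ0 n
    set μn := iterLaw Kq μ0 n with hμn
    have hcf : Continuous (mapFst (d := d) (S := S)) :=
      continuous_pi fun x => (continuous_apply x).fst
    have hcs : Continuous (mapSnd (d := d) (S := S)) :=
      continuous_pi fun x => (continuous_apply x).snd
    haveI : SecondCountableTopology (S × S) := inferInstance
    have hint1 : Integrable (fun ω => f (mapFst ω)) μn :=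
      (BoundedContinuousFunction.mkOfCompact ⟨fun ω => f (mapFst ω), hf.comp hcf⟩).integrable μn
    have hint2 : Integrable (fun ω => f (mapSnd ω)) μn :=
      (BoundedContinuousFunction.mkOfCompact ⟨fun ω => f (mapSnd ω), hf.comp hcs⟩).integrable μn
    rw [integral_map measurable_mapFst.aemeasurable (hfm.aestronglyMeasurable),
      integral_map measurable_mapSnd.aemeasurable (hfm.aestronglyMeasurable),
      ← integral_sub hint1 hint2]
    have habs : |∫ ω, (f (mapFst ω) - f (mapSnd ω)) ∂μn|
        ≤ (∫⁻ ω, ENNReal.ofReal |f (mapFst ω) - f (mapSnd ω)| ∂μn).toReal := by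
      have h := norm_integral_le_lintegral_norm (μ := μn)
        (fun ω => f (mapFst ω) - f (mapSnd ω))
      simpa [Real.norm_eq_abs] using h
    -- pointwise oscillation bound
    have hpt : ∀ ω : Config d (S × S), ENNReal.ofReal |f (mapFst ω) - f (mapSnd ω)|
        ≤ ∑' k : Site d, ENNReal.ofReal (varAt f k) *
            ({ω' : Config d (S × S) | (ω' k).1 ≠ (ω' k).2}).indicator (fun _ => 1) ω := by
      intro ω
      have hosc := osc_bound hf hC hsum (mapFst ω) (mapSnd ω)
      have hsw : Summable fun k : Site d =>
          varAt f k * (if mapFst ω k = mapSnd ω k then 0 else 1) := by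
        refine Summable.of_nonneg_of_le (fun k => ?_) (fun k => ?_) hsum
        · by_cases h : mapFst ω k = mapSnd ω k <;> simp [h, varAt_nonneg hC]
        · by_cases h : mapFst ω k = mapSnd ω k <;> simp [h, varAt_nonneg hC]
      calc ENNReal.ofReal |f (mapFst ω) - f (mapSnd ω)|
          ≤ ENNReal.ofReal (∑' k : Site d,
              varAt f k * (if mapFst ω k = mapSnd ω k then 0 else 1)) :=
            ENNReal.ofReal_le_ofReal hosc
        _ = ∑' k : Site d, ENNReal.ofReal
              (varAt f k * (if mapFst ω k = mapSnd ω k then 0 else 1)) := by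
            refine ENNReal.ofReal_tsum_of_nonneg (fun k => ?_) hsw
            by_cases h : mapFst ω k = mapSnd ω k <;> simp [h, varAt_nonneg hC]
        _ ≤ ∑' k : Site d, ENNReal.ofReal (varAt f k) *
              ({ω' : Config d (S × S) | (ω' k).1 ≠ (ω' k).2}).indicator (fun _ => 1) ω := by
            refine ENNReal.tsum_le_tsum fun k => ?_
            by_cases h : (ω k).1 = (ω k).2
            · have h' : mapFst ω k = mapSnd ω k := h
              rw [if_pos h', Set.indicator_of_notMem (by simp [h])]
              simp
            · have h' : ¬ mapFst ω k = mapSnd ω k := h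
              rw [if_neg h', Set.indicator_of_mem (by simp [h])]
              simp
    have hlin : (∫⁻ ω, ENNReal.ofReal |f (mapFst ω) - f (mapSnd ω)| ∂μn)
        ≤ ENNReal.ofReal V * ρ := by
      calc ∫⁻ ω, ENNReal.ofReal |f (mapFst ω) - f (mapSnd ω)| ∂μn
          ≤ ∫⁻ ω, ∑' k : Site d, ENNReal.ofReal (varAt f k) *
              ({ω' : Config d (S × S) | (ω' k).1 ≠ (ω' k).2}).indicator (fun _ => 1) ω ∂μn :=
            lintegral_mono hpt
        _ = ∑' k : Site d, ∫⁻ ω, ENNReal.ofReal (varAt f k) *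
              ({ω' : Config d (S × S) | (ω' k).1 ≠ (ω' k).2}).indicator (fun _ => 1) ω ∂μn := by
            refine lintegral_tsum fun k => ?_
            exact ((measurable_const.indicator (hNemeas k)).const_mul _).aemeasurable
        _ = ∑' k : Site d, ENNReal.ofReal (varAt f k) *
              μn {ω : Config d (S × S) | (ω k).1 ≠ (ω k).2} := by
            refine tsum_congr fun k => ?_
            rw [lintegral_const_mul _ (measurable_const.indicator (hNemeas k)),
              lintegral_ind _ (hNemeas k)]
        _ ≤ ∑' k : Site d, ENNReal.ofReal (varAt f k) * ρ := by
            refine ENNReal.tsum_le_tsum fun k => ?_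
            refine mul_le_mul_right ?_ _
            -- disagreement bound
            have hsplit : {ω : Config d (S × S) | (ω k).1 ≠ (ω k).2}
                ⊆ {ω : Config d (S × S) | (ω k).1 < (ω k).2} ∪ (OrdSet (d := d) S)ᶜ := by
              intro ω hω
              by_cases hord : ω ∈ OrdSet (d := d) S
              · exact Or.inl (lt_of_le_of_ne (hord k) hω)
              · exact Or.inr hord
            calc μn {ω : Config d (S × S) | (ω k).1 ≠ (ω k).2}
                ≤ μn ({ω : Config d (S × S) | (ω k).1 < (ω k).2} ∪ (OrdSet (d := d) S)ᶜ) :=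
                  measure_mono hsplit
              _ ≤ μn {ω : Config d (S × S) | (ω k).1 < (ω k).2} + μn (OrdSet (d := d) S)ᶜ :=
                  measure_union_le _ _
              _ = μn {ω : Config d (S × S) | (ω k).1 < (ω k).2} := by
                  rw [hμn, hOrd μ0 hμ0ord n, add_zero]
              _ = ∫⁻ ω, G0 k ω ∂μn := (lintegral_ind _ (hLtmeas k)).symm
              _ = ∫⁻ η, Gs k n η ∂μ0 := hchain k μ0
              _ ≤ ∫⁻ _, Gs k n ηbt ∂μ0 := lintegral_mono fun η => htw k η
              _ = Gs k n ηbt := by rw [lintegral_const, measure_univ, mul_one]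
              _ = iterLaw Kq (Measure.dirac ηbt) n
                    {ω : Config d (S × S) | (ω k).1 < (ω k).2} := hval k
              _ ≤ iterLaw Kq (Measure.dirac ηbt) n
                    {ω : Config d (S × S) | (ω k).1 ≠ (ω k).2} :=
                  measure_mono fun ω hω => ne_of_lt hω
              _ = ρ := hρk k
        _ = (∑' k : Site d, ENNReal.ofReal (varAt f k)) * ρ := ENNReal.tsum_mul_right
        _ = ENNReal.ofReal V * ρ := by
            rw [hV, ENNReal.ofReal_tsum_of_nonneg (fun k => varAt_nonneg hC k) hsum]
    have hfin : ENNReal.ofReal V * ρ ≠ ⊤ := by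
      refine ENNReal.mul_ne_top ENNReal.ofReal_ne_top ?_
      haveI : IsProbabilityMeasure (iterLaw Kq (Measure.dirac ηbt) n) :=
        iterLaw_prob Kq (Measure.dirac ηbt) n
      exact ne_top_of_le_ne_top ENNReal.one_ne_top prob_le_one
    calc |∫ ω, (f (mapFst ω) - f (mapSnd ω)) ∂μn|
        ≤ (∫⁻ ω, ENNReal.ofReal |f (mapFst ω) - f (mapSnd ω)| ∂μn).toReal := habs
      _ ≤ (ENNReal.ofReal V * ρ).toReal := ENNReal.toReal_mono hfin hlin
      _ = V * ρ.toReal := by rw [ENNReal.toReal_mul, ENNReal.toReal_ofReal hV0]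
  -- Term 1 : compare starting from σ and from the top configuration
  set top1 : Config d S := (fun _ => topS S) with htop1
  set pσ : Config d (S × S) := (fun x => (σ x, topS S)) with hpσ
  have hord1 : Measure.dirac pσ (OrdSet (d := d) S)ᶜ = 0 := by
    rw [Measure.dirac_apply' _ measurableSet_OrdSet.compl]
    refine Set.indicator_of_notMem ?_ _
    simp only [Set.mem_compl_iff, not_not]
    intro x
    exact le_topS _
  have hmarg1 := iter_marg P Q hQ (Measure.dirac pσ) n
  have hm1f : (Measure.dirac pσ).map mapFst = Measure.dirac σ := by
    rw [Measure.map_dirac' measurable_mapFst]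
    rfl
  have hm1s : (Measure.dirac pσ).map mapSnd = Measure.dirac top1 := by
    rw [Measure.map_dirac' measurable_mapSnd]
    rfl
  have term1 : |(∫ x, f x ∂iterLaw P.toKernel (Measure.dirac σ) n)
      - ∫ x, f x ∂iterLaw P.toKernel (Measure.dirac top1) n| ≤ V * ρ.toReal := by
    have h := key (Measure.dirac pσ) inferInstance hord1
    rw [hmarg1.1, hmarg1.2, hm1f, hm1s] at h
    exact h
  -- Term 2 : compare time n with time m + n starting from the top configuration
  have term2m : ∀ m : ℕ, |(∫ x, f x ∂iterLaw P.toKernel (Measure.dirac top1) n)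
      - ∫ x, f x ∂iterLaw P.toKernel (Measure.dirac top1) (m + n)| ≤ V * ρ.toReal := by
    intro m
    haveI : IsProbabilityMeasure (iterLaw P.toKernel (Measure.dirac top1) m) :=
      iterLaw_prob P.toKernel (Measure.dirac top1) m
    set pair : Config d S → Config d (S × S) := fun ζ x => (ζ x, topS S) with hpair
    have hpairm : Measurable pair :=
      measurable_pi_lambda _ fun x => (measurable_pi_apply x).prodMk measurable_const
    set μ0 := (iterLaw P.toKernel (Measure.dirac top1) m).map pair with hμ0
    haveI : IsProbabilityMeasure μ0 := Measure.isProbabilityMeasure_map hpairm.aemeasurable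
    have h0 : μ0 (OrdSet (d := d) S)ᶜ = 0 := by
      rw [hμ0, Measure.map_apply hpairm measurableSet_OrdSet.compl]
      have : pair ⁻¹' (OrdSet (d := d) S)ᶜ = ∅ := by
        ext ζ
        simp only [Set.mem_preimage, Set.mem_compl_iff, Set.mem_empty_iff_false, iff_false,
          not_not]
        intro x
        exact le_topS _
      rw [this, measure_empty]
    have hfst : μ0.map mapFst = iterLaw P.toKernel (Measure.dirac top1) m := by
      rw [hμ0, Measure.map_map measurable_mapFst hpairm]
      have : mapFst (d := d) (S := S) ∘ pair = id := rfl
      rw [this, Measure.map_id]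
    have hsnd : μ0.map mapSnd = Measure.dirac top1 := by
      rw [hμ0, Measure.map_map measurable_mapSnd hpairm]
      have : mapSnd (d := d) (S := S) ∘ pair = fun _ => top1 := rfl
      rw [this, Measure.map_const, measure_univ, one_smul]
    have h := key μ0 inferInstance h0
    rw [(iter_marg P Q hQ μ0 n).1, (iter_marg P Q hQ μ0 n).2, hfst, hsnd,
      iterLaw_add P.toKernel (Measure.dirac top1) m n] at h
    rw [abs_sub_comm] at h
    exact h
  have hconv : Tendsto (fun m => ∫ x, f x ∂iterLaw P.toKernel (Measure.dirac top1) (m + n))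
      atTop (nhds (∫ x, f x ∂ν)) := by
    have h := herg top1 fbc
    have h2 := h.comp (tendsto_add_atTop_nat n)
    exact h2
  have term2 : |(∫ x, f x ∂iterLaw P.toKernel (Measure.dirac top1) n)
      - ∫ x, f x ∂ν| ≤ V * ρ.toReal := by
    have htend : Tendsto (fun m => |(∫ x, f x ∂iterLaw P.toKernel (Measure.dirac top1) n)
        - ∫ x, f x ∂iterLaw P.toKernel (Measure.dirac top1) (m + n)|) atTop
        (nhds |(∫ x, f x ∂iterLaw P.toKernel (Measure.dirac top1) n) - ∫ x, f x ∂ν|) :=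
      (tendsto_const_nhds.sub hconv).abs
    exact le_of_tendsto htend (Filter.Eventually.of_forall term2m)
  calc |(∫ x, f x ∂iterLaw P.toKernel (Measure.dirac σ) n) - ∫ x, f x ∂ν|
      ≤ |(∫ x, f x ∂iterLaw P.toKernel (Measure.dirac σ) n)
          - ∫ x, f x ∂iterLaw P.toKernel (Measure.dirac top1) n|
        + |(∫ x, f x ∂iterLaw P.toKernel (Measure.dirac top1) n) - ∫ x, f x ∂ν| :=
        abs_sub_le _ _ _
    _ ≤ V * ρ.toReal + V * ρ.toReal := add_le_add term1 term2
    _ = 2 * V * ρ.toReal := by ring
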